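/- arXiv:2411.14260 — 3 statements merged into one kernel-verified Lean document; each statement's English description precedes it below -/
import Mathlib

section
/- Let d ≥ 1, p ∈ (1,∞), s ∈ (0,1), and let Ω ⊂ ℝ^d be open and bounded. Let U, V ∈ W^{s,p}_0(Ω) and let γ : ℝ → ℝ be nondecreasing and Lipschitz with γ(0) = 0 (so that γ∘(U−V) ∈ W^{s,p}_0(Ω)). Then E(U, γ∘(U−V)) − E(V, γ∘(U−V)) ≥ 0. -/
open MeasureTheory ENNReal

/-- Signed power: `spow r x = |x|^(r-1) * x`. -/
noncomputable def spow (r x : ℝ) : ℝ := |x| ^ (r - 1) * x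

/-- Fractional p-Laplacian pairing
`E(u,φ) = ∫∫ ⟦u(x)−u(y)⟧^{p−1}(φ(x)−φ(y)) |x−y|^{−(d+sp)} dx dy`. -/
noncomputable def fracPairing (d : ℕ) (s p : ℝ)
    (u φ : EuclideanSpace ℝ (Fin d) → ℝ) : ℝ :=
  ∫ z : EuclideanSpace ℝ (Fin d) × EuclideanSpace ℝ (Fin d),
    spow (p - 1) (u z.1 - u z.2) * (φ z.1 - φ z.2) / ‖z.1 - z.2‖ ^ ((d : ℝ) + s * p)

/-- Gagliardo seminorm to the `p`-th power, as an extended nonnegative real. -/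
noncomputable def gagliardo (d : ℕ) (s p : ℝ)
    (u : EuclideanSpace ℝ (Fin d) → ℝ) : ℝ≥0∞ :=
  ∫⁻ z : EuclideanSpace ℝ (Fin d) × EuclideanSpace ℝ (Fin d),
    ENNReal.ofReal (|u z.1 - u z.2| ^ p / ‖z.1 - z.2‖ ^ ((d : ℝ) + s * p))

/-- Membership in `W^{s,p}_0(Ω)`. -/
def memW0 (d : ℕ) (s p : ℝ) (Ω : Set (EuclideanSpace ℝ (Fin d)))
    (u : EuclideanSpace ℝ (Fin d) → ℝ) : Prop :=
  Measurable u ∧ MemLp u (ENNReal.ofReal p) volume ∧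
    gagliardo d s p u < ⊤ ∧ ∀ᵐ x, x ∉ Ω → u x = 0

/- ### Auxiliary lemmas -/

lemma rpow_sub_one_mul {r : ℝ} (hr : 0 < r) {a : ℝ} (ha : 0 ≤ a) :
    a ^ (r - 1) * a = a ^ r := by
  rcases ha.lt_or_eq with h | h
  · rw [← Real.rpow_add_one h.ne' (r - 1)]
    norm_num
  · rw [← h]
    simp [Real.zero_rpow hr.ne']

lemma spow_of_nonneg {r : ℝ} (hr : 0 < r) {x : ℝ} (hx : 0 ≤ x) :
    spow r x = x ^ r := by
  rw [spow, abs_of_nonneg hx, rpow_sub_one_mul hr hx]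

lemma spow_neg (r x : ℝ) : spow r (-x) = -spow r x := by
  simp [spow, abs_neg]

lemma spow_of_nonpos {r : ℝ} (hr : 0 < r) {x : ℝ} (hx : x ≤ 0) :
    spow r x = -((-x) ^ r) := by
  have : spow r x = -spow r (-x) := by rw [spow_neg]; ring
  rw [this, spow_of_nonneg hr (by linarith)]

lemma abs_spow {r : ℝ} (hr : 0 < r) (x : ℝ) : |spow r x| = |x| ^ r := by
  rw [spow, abs_mul, abs_of_nonneg (Real.rpow_nonneg (abs_nonneg x) _),
    rpow_sub_one_mul hr (abs_nonneg x)]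

lemma spow_mono {r : ℝ} (hr : 0 < r) : Monotone (spow r) := by
  intro x y hxy
  rcases le_total 0 x with hx | hx
  · rw [spow_of_nonneg hr hx, spow_of_nonneg hr (hx.trans hxy)]
    exact Real.rpow_le_rpow hx hxy hr.le
  · rcases le_total y 0 with hy | hy
    · rw [spow_of_nonpos hr (hxy.trans hy), spow_of_nonpos hr hy]
      exact neg_le_neg (Real.rpow_le_rpow (by linarith) (by linarith) hr.le)
    · have h1 : spow r x ≤ 0 :=
        mul_nonpos_of_nonneg_of_nonpos (Real.rpow_nonneg (abs_nonneg x) _) hx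
      have h2 : 0 ≤ spow r y := by
        rw [spow_of_nonneg hr hy]; exact Real.rpow_nonneg hy r
      linarith

/-- Young-type bound: `a^(p-1) * b ≤ a^p + b^p` for nonnegative `a, b`. -/
lemma rpow_mul_le {p : ℝ} (hp : 1 < p) {a b : ℝ} (ha : 0 ≤ a) (hb : 0 ≤ b) :
    a ^ (p - 1) * b ≤ a ^ p + b ^ p := by
  rcases le_total b a with h | h
  · calc a ^ (p - 1) * b ≤ a ^ (p - 1) * a :=
          mul_le_mul_of_nonneg_left h (Real.rpow_nonneg ha _)
      _ = a ^ p := rpow_sub_one_mul (by linarith) ha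
      _ ≤ a ^ p + b ^ p := by have := Real.rpow_nonneg hb p; linarith
  · calc a ^ (p - 1) * b ≤ b ^ (p - 1) * b :=
          mul_le_mul_of_nonneg_right (Real.rpow_le_rpow ha h (by linarith)) hb
      _ = b ^ p := rpow_sub_one_mul (by linarith) hb
      _ ≤ a ^ p + b ^ p := by have := Real.rpow_nonneg ha p; linarith

/-- Pointwise domination of the pairing integrand. -/
lemma pointwise_bound {p : ℝ} (hp : 1 < p) {K : ℝ} (hK : 0 ≤ K)
    {a b c φd : ℝ} (hc : 0 ≤ c) (hφ : |φd| ≤ K * (|a| + |b|)) :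
    |spow (p - 1) a * φd / c| ≤ K * (2 * (|a| ^ p / c) + 2 * (|b| ^ p / c)) := by
  rcases hc.eq_or_lt with h | h
  · rw [← h]
    simp
  · have hq : (0 : ℝ) < p - 1 := by linarith
    rw [abs_div, abs_of_pos h, abs_mul, abs_spow hq]
    have key : |a| ^ (p - 1) * |φd| ≤ K * (2 * |a| ^ p + 2 * |b| ^ p) := by
      have h1 : |a| ^ (p - 1) * |φd| ≤ |a| ^ (p - 1) * (K * (|a| + |b|)) :=
        mul_le_mul_of_nonneg_left hφ (Real.rpow_nonneg (abs_nonneg a) _)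
      have h2 : |a| ^ (p - 1) * |a| = |a| ^ p :=
        rpow_sub_one_mul (by linarith) (abs_nonneg a)
      have h3 : |a| ^ (p - 1) * |b| ≤ |a| ^ p + |b| ^ p :=
        rpow_mul_le hp (abs_nonneg a) (abs_nonneg b)
      have h4 : 0 ≤ |b| ^ p := Real.rpow_nonneg (abs_nonneg b) p
      nlinarith [Real.rpow_nonneg (abs_nonneg a) p]
    have heq : K * (2 * (|a| ^ p / c) + 2 * (|b| ^ p / c))
        = K * (2 * |a| ^ p + 2 * |b| ^ p) / c := by
      field_simp
    rw [heq]
    exact div_le_div_of_nonneg_right key h.le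

/-- Integrability of `|Δu|^p / ‖x-y‖^α` given finite Gagliardo seminorm. -/
lemma integrable_gagliardo {d : ℕ} {s p : ℝ} (hp : 0 < p) (hs : 0 ≤ s)
    {u : EuclideanSpace ℝ (Fin d) → ℝ} (hu : Measurable u)
    (hfin : gagliardo d s p u < ⊤) :
    Integrable (fun z : EuclideanSpace ℝ (Fin d) × EuclideanSpace ℝ (Fin d) =>
      |u z.1 - u z.2| ^ p / ‖z.1 - z.2‖ ^ ((d : ℝ) + s * p)) := by
  have hα : (0 : ℝ) ≤ (d : ℝ) + s * p := by positivity
  have hm : Measurable (fun z : EuclideanSpace ℝ (Fin d) × EuclideanSpace ℝ (Fin d) =>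
      |u z.1 - u z.2| ^ p / ‖z.1 - z.2‖ ^ ((d : ℝ) + s * p)) := by
    have h1 : Measurable (fun z : EuclideanSpace ℝ (Fin d) × EuclideanSpace ℝ (Fin d) =>
        |u z.1 - u z.2| ^ p) :=
      (Real.continuous_rpow_const hp.le).measurable.comp
        ((hu.comp measurable_fst).sub (hu.comp measurable_snd)).abs
    have h2 : Measurable (fun z : EuclideanSpace ℝ (Fin d) × EuclideanSpace ℝ (Fin d) =>
        ‖z.1 - z.2‖ ^ ((d : ℝ) + s * p)) :=
      (Real.continuous_rpow_const hα).measurable.comp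
        (measurable_fst.sub measurable_snd).norm
    exact h1.div h2
  refine ⟨hm.aestronglyMeasurable, ?_⟩
  rw [hasFiniteIntegral_iff_ofReal ?_]
  · exact hfin
  · filter_upwards with z
    exact div_nonneg (Real.rpow_nonneg (abs_nonneg _) _)
      (Real.rpow_nonneg (norm_nonneg _) _)

/-- For `U, V ∈ W^{s,p}_0(Ω)` and `γ` nondecreasing, Lipschitz with
`γ(0) = 0`, one has `E(U, γ∘(U−V)) − E(V, γ∘(U−V)) ≥ 0`. -/
theorem stmt1 (d : ℕ) (hd : 1 ≤ d) (p s : ℝ) (hp : 1 < p) (hs : s ∈ Set.Ioo (0 : ℝ) 1)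
    (Ω : Set (EuclideanSpace ℝ (Fin d))) (hΩo : IsOpen Ω) (hΩb : Bornology.IsBounded Ω)
    (U V : EuclideanSpace ℝ (Fin d) → ℝ)
    (hU : memW0 d s p Ω U) (hV : memW0 d s p Ω V)
    (γ : ℝ → ℝ) (hmono : Monotone γ) (K : NNReal) (hlip : LipschitzWith K γ)
    (hγ0 : γ 0 = 0) :
    fracPairing d s p U (fun x => γ (U x - V x)) -
      fracPairing d s p V (fun x => γ (U x - V x)) ≥ 0 := by
  obtain ⟨hs0, -⟩ := hs
  have hq : (0 : ℝ) < p - 1 := by linarith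
  have hp0 : (0 : ℝ) < p := by linarith
  set E2 := EuclideanSpace ℝ (Fin d) × EuclideanSpace ℝ (Fin d)
  set α : ℝ := (d : ℝ) + s * p with hαdef
  set φ : EuclideanSpace ℝ (Fin d) → ℝ := fun x => γ (U x - V x) with hφdef
  have hφm : Measurable φ := hlip.continuous.measurable.comp (hU.1.sub hV.1)
  set f : E2 → ℝ := fun z =>
    spow (p - 1) (U z.1 - U z.2) * (φ z.1 - φ z.2) / ‖z.1 - z.2‖ ^ α with hfdef
  set g : E2 → ℝ := fun z =>
    spow (p - 1) (V z.1 - V z.2) * (φ z.1 - φ z.2) / ‖z.1 - z.2‖ ^ α with hgdef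
  -- measurability of the two integrands
  have hspowm : Measurable (spow (p - 1)) := (spow_mono hq).measurable
  have hkm : Measurable (fun z : E2 => ‖z.1 - z.2‖ ^ α) :=
    (Real.continuous_rpow_const (by positivity)).measurable.comp
      (measurable_fst.sub measurable_snd).norm
  have hΔφm : Measurable (fun z : E2 => φ z.1 - φ z.2) :=
    (hφm.comp measurable_fst).sub (hφm.comp measurable_snd)
  have hfm : Measurable f :=
    ((hspowm.comp ((hU.1.comp measurable_fst).sub (hU.1.comp measurable_snd))).mul
      hΔφm).div hkm
  have hgm : Measurable g :=
    ((hspowm.comp ((hV.1.comp measurable_fst).sub (hV.1.comp measurable_snd))).mul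
      hΔφm).div hkm
  -- the dominating function
  have hIU := integrable_gagliardo hp0 hs0.le hU.1 hU.2.2.1
  have hIV := integrable_gagliardo hp0 hs0.le hV.1 hV.2.2.1
  set H : E2 → ℝ := fun z =>
    (K : ℝ) * (2 * (|U z.1 - U z.2| ^ p / ‖z.1 - z.2‖ ^ α)
      + 2 * (|V z.1 - V z.2| ^ p / ‖z.1 - z.2‖ ^ α)) with hHdef
  have hIH : Integrable H := ((hIU.const_mul 2).add (hIV.const_mul 2)).const_mul (K : ℝ)
  -- the Lipschitz bound on the increment of φ
  have hφb : ∀ z : E2, |φ z.1 - φ z.2|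
      ≤ (K : ℝ) * (|U z.1 - U z.2| + |V z.1 - V z.2|) := by
    intro z
    have h1 : |φ z.1 - φ z.2| ≤ (K : ℝ) * |(U z.1 - V z.1) - (U z.2 - V z.2)| := by
      have h := hlip.dist_le_mul (U z.1 - V z.1) (U z.2 - V z.2)
      simp only [Real.dist_eq] at h
      exact h
    have h2 : |(U z.1 - V z.1) - (U z.2 - V z.2)|
        ≤ |U z.1 - U z.2| + |V z.1 - V z.2| := by
      have he : (U z.1 - V z.1) - (U z.2 - V z.2)
          = (U z.1 - U z.2) - (V z.1 - V z.2) := by ring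
      rw [he]
      exact abs_sub _ _
    exact h1.trans (mul_le_mul_of_nonneg_left h2 K.coe_nonneg)
  -- integrability of the two integrands
  have hIf : Integrable f := by
    refine hIH.mono' hfm.aestronglyMeasurable ?_
    filter_upwards with z
    rw [Real.norm_eq_abs]
    exact pointwise_bound hp K.coe_nonneg (Real.rpow_nonneg (norm_nonneg _) _) (hφb z)
  have hIg : Integrable g := by
    refine hIH.mono' hgm.aestronglyMeasurable ?_
    filter_upwards with z
    rw [Real.norm_eq_abs]
    have hb : |φ z.1 - φ z.2| ≤ (K : ℝ) * (|V z.1 - V z.2| + |U z.1 - U z.2|) := by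
      have := hφb z; linarith
    have := pointwise_bound hp K.coe_nonneg
      (Real.rpow_nonneg (norm_nonneg (z.1 - z.2)) α) hb
    calc |spow (p - 1) (V z.1 - V z.2) * (φ z.1 - φ z.2) / ‖z.1 - z.2‖ ^ α|
        ≤ (K : ℝ) * (2 * (|V z.1 - V z.2| ^ p / ‖z.1 - z.2‖ ^ α)
          + 2 * (|U z.1 - U z.2| ^ p / ‖z.1 - z.2‖ ^ α)) := this
      _ = H z := by rw [hHdef]; ring
  -- pointwise nonnegativity of f - g
  have hpt : ∀ z : E2, 0 ≤ f z - g z := by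
    intro z
    have hfg : f z - g z = (spow (p - 1) (U z.1 - U z.2) - spow (p - 1) (V z.1 - V z.2))
        * (φ z.1 - φ z.2) / ‖z.1 - z.2‖ ^ α := by
      rw [hfdef, hgdef]
      ring
    rw [hfg]
    apply div_nonneg _ (Real.rpow_nonneg (norm_nonneg _) _)
    rcases le_total (U z.2 - V z.2) (U z.1 - V z.1) with h | h
    · have h1 : γ (U z.2 - V z.2) ≤ γ (U z.1 - V z.1) := hmono h
      have h2 : V z.1 - V z.2 ≤ U z.1 - U z.2 := by linarith
      have h3 : spow (p - 1) (V z.1 - V z.2) ≤ spow (p - 1) (U z.1 - U z.2) :=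
        spow_mono hq h2
      exact mul_nonneg (by linarith) (by simp only [hφdef]; linarith)
    · have h1 : γ (U z.1 - V z.1) ≤ γ (U z.2 - V z.2) := hmono h
      have h2 : U z.1 - U z.2 ≤ V z.1 - V z.2 := by linarith
      have h3 : spow (p - 1) (U z.1 - U z.2) ≤ spow (p - 1) (V z.1 - V z.2) :=
        spow_mono hq h2
      have hx : spow (p - 1) (U z.1 - U z.2) - spow (p - 1) (V z.1 - V z.2) ≤ 0 := by
        linarith
      have hy : φ z.1 - φ z.2 ≤ 0 := by simp only [hφdef]; linarith
      nlinarith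
  -- conclusion
  have heq : fracPairing d s p U φ - fracPairing d s p V φ = ∫ z : E2, (f z - g z) := by
    rw [integral_sub hIf hIg]
    rfl
  have : (0 : ℝ) ≤ ∫ z : E2, (f z - g z) := integral_nonneg hpt
  calc (0:ℝ) ≤ ∫ z : E2, (f z - g z) := this
    _ = fracPairing d s p U φ - fracPairing d s p V φ := heq.symm
    _ ≤ _ := le_refl _
end

section
/- (Weak comparison principle.) Let d ≥ 1, p ∈ (1,∞), s ∈ (0,1), let Ω ⊂ ℝ^d be open and bounded, λ > 0, r ∈ [1,∞] with conjugate exponent r′, and let g : ℝ → ℝ be nondecreasing. Let u, v ∈ L^r(Ω) ∩ W^{s,p}_0(Ω) be such that g∘u, g∘v ∈ L^{r′}(Ω) and for every nonnegative φ ∈ L^r(Ω) ∩ W^{s,p}_0(Ω): ∫_Ω g(u)φ dx + λ E(u,φ) ≤ ∫_Ω g(v)φ dx + λ E(v,φ). Then u ≤ v a.e. in Ω. -/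
open MeasureTheory ENNReal

lemma spow_nonneg_eq {q a : ℝ} (hq : 0 < q) (ha : 0 ≤ a) : spow q a = a ^ q := by
  rcases eq_or_lt_of_le ha with h | h
  · simp [spow, ← h, Real.zero_rpow hq.ne']
  · rw [spow, abs_of_pos h, ← Real.rpow_add_one h.ne']
    ring_nf

lemma spow_neg_s2 (q a : ℝ) : spow q (-a) = - spow q a := by
  simp only [spow, abs_neg, mul_neg]

lemma spow_strictMono {q : ℝ} (hq : 0 < q) : StrictMono (spow q) := by
  have hpos : ∀ x : ℝ, 0 < x → 0 < spow q x := by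
    intro x hx
    rw [spow_nonneg_eq hq hx.le]
    exact Real.rpow_pos_of_pos hx q
  have hnn : ∀ x : ℝ, 0 ≤ x → 0 ≤ spow q x := by
    intro x hx
    rw [spow_nonneg_eq hq hx]
    exact Real.rpow_nonneg hx q
  intro a b hab
  rcases le_or_gt 0 a with ha | ha
  · rw [spow_nonneg_eq hq ha, spow_nonneg_eq hq (ha.trans hab.le)]
    exact Real.rpow_lt_rpow ha hab hq
  · rcases le_or_gt 0 b with hb | hb
    · have h1 : spow q a < 0 := by
        have := hpos (-a) (by linarith)
        rw [spow_neg_s2] at this; linarith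
      exact lt_of_lt_of_le h1 (hnn b hb)
    · have h2 : spow q (-b) < spow q (-a) := by
        rw [spow_nonneg_eq hq (by linarith : (0:ℝ) ≤ -b), spow_nonneg_eq hq (by linarith : (0:ℝ) ≤ -a)]
        exact Real.rpow_lt_rpow (by linarith) (by linarith) hq
      rw [spow_neg_s2, spow_neg_s2] at h2; linarith

lemma abs_spow_s2 {q : ℝ} (hq : 0 < q) (a : ℝ) : |spow q a| = |a| ^ q := by
  rcases eq_or_ne a 0 with rfl | ha
  · simp [spow, Real.zero_rpow hq.ne']
  · have h : |a| ≠ 0 := abs_ne_zero.mpr ha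
    rw [spow, abs_mul, abs_of_nonneg (Real.rpow_nonneg (abs_nonneg a) _),
      ← Real.rpow_add_one h]
    ring_nf

lemma measurable_spow (q : ℝ) : Measurable (spow q) :=
  (measurable_id.abs.pow measurable_const).mul measurable_id

lemma posPart_lt_posPart {a b : ℝ} (h : max a 0 < max b 0) : a < b := by
  by_contra hle
  push_neg at hle
  exact absurd (max_le_max hle le_rfl) (not_le.mpr h)

lemma add_rpow_le_two_rpow {p x y : ℝ} (hp : 0 ≤ p) (hx : 0 ≤ x) (hy : 0 ≤ y) :
    (x + y) ^ p ≤ 2 ^ p * (x ^ p + y ^ p) := by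
  have h1 : x + y ≤ 2 * max x y := by
    rcases max_cases x y with ⟨h, h'⟩ | ⟨h, h'⟩ <;> rw [h] <;> linarith
  calc (x + y) ^ p ≤ (2 * max x y) ^ p :=
        Real.rpow_le_rpow (by linarith) h1 hp
    _ = 2 ^ p * (max x y) ^ p := Real.mul_rpow (by norm_num) (le_max_of_le_left hx)
    _ ≤ 2 ^ p * (x ^ p + y ^ p) := by
        apply mul_le_mul_of_nonneg_left _ (Real.rpow_nonneg (by norm_num) p)
        rcases max_cases x y with ⟨h, _⟩ | ⟨h, _⟩ <;> rw [h]
        · nlinarith [Real.rpow_nonneg hy p]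
        · nlinarith [Real.rpow_nonneg hx p]


lemma measurable_kernel (d : ℕ) (t : ℝ) :
    Measurable fun z : EuclideanSpace ℝ (Fin d) × EuclideanSpace ℝ (Fin d) =>
      ‖z.1 - z.2‖ ^ t :=
  (measurable_fst.sub measurable_snd).norm.pow measurable_const

lemma measurable_gag_integrand {d : ℕ} {w : EuclideanSpace ℝ (Fin d) → ℝ}
    (hw : Measurable w) (p t : ℝ) :
    Measurable fun z : EuclideanSpace ℝ (Fin d) × EuclideanSpace ℝ (Fin d) =>
      ENNReal.ofReal (|w z.1 - w z.2| ^ p / ‖z.1 - z.2‖ ^ t) :=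
  ((((hw.comp measurable_fst).sub (hw.comp measurable_snd)).abs.pow
    measurable_const).div (measurable_kernel d t)).ennreal_ofReal

lemma holder_pointwise {p : ℝ} (hp : 1 < p) (a c K : ℝ) (hK : 0 ≤ K) :
    |a| ^ (p - 1) * |c| / K ≤ (|a| ^ p / K) ^ ((p - 1) / p) * (|c| ^ p / K) ^ (1 / p) := by
  have hp0 : (0:ℝ) < p := by linarith
  rcases eq_or_lt_of_le hK with h0 | hKpos
  · rw [← h0]
    norm_num
    exact mul_nonneg (Real.rpow_nonneg le_rfl _) (Real.rpow_nonneg le_rfl _)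
  · apply le_of_eq
    rw [Real.div_rpow (Real.rpow_nonneg (abs_nonneg a) p) hK,
      Real.div_rpow (Real.rpow_nonneg (abs_nonneg c) p) hK,
      ← Real.rpow_mul (abs_nonneg a), ← Real.rpow_mul (abs_nonneg c),
      mul_div_cancel₀ _ hp0.ne', one_div, mul_inv_cancel₀ hp0.ne', Real.rpow_one,
      div_mul_div_comm, ← Real.rpow_add hKpos]
    have : (p - 1) / p + p⁻¹ = 1 := by field_simp; ring
    rw [this, Real.rpow_one]

set_option maxHeartbeats 1000000 in
lemma integrable_pairing {d : ℕ} {s p : ℝ} (hp : 1 < p)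
    {w φ : EuclideanSpace ℝ (Fin d) → ℝ} (hw : Measurable w) (hφ : Measurable φ)
    (hgw : gagliardo d s p w < ⊤) (hgφ : gagliardo d s p φ < ⊤) :
    Integrable (fun z : EuclideanSpace ℝ (Fin d) × EuclideanSpace ℝ (Fin d) =>
      spow (p - 1) (w z.1 - w z.2) * (φ z.1 - φ z.2) / ‖z.1 - z.2‖ ^ ((d : ℝ) + s * p))
      volume := by
  have hp0 : (0:ℝ) < p := by linarith
  have hp1 : (0:ℝ) < p - 1 := by linarith
  have hq : (p / (p - 1)).HolderConjugate p := (Real.HolderConjugate.conjExponent hp).symm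
  set t := (d : ℝ) + s * p with ht
  have hmeasF : Measurable (fun z : EuclideanSpace ℝ (Fin d) × EuclideanSpace ℝ (Fin d) =>
      spow (p - 1) (w z.1 - w z.2) * (φ z.1 - φ z.2) / ‖z.1 - z.2‖ ^ t) :=
    ((((measurable_spow (p - 1)).comp
        ((hw.comp measurable_fst).sub (hw.comp measurable_snd))).mul
      ((hφ.comp measurable_fst).sub (hφ.comp measurable_snd))).div (measurable_kernel d t))
  refine ⟨hmeasF.aestronglyMeasurable, ?_⟩
  rw [hasFiniteIntegral_iff_norm]
  set Gw := fun z : EuclideanSpace ℝ (Fin d) × EuclideanSpace ℝ (Fin d) =>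
    ENNReal.ofReal (|w z.1 - w z.2| ^ p / ‖z.1 - z.2‖ ^ t) with hGw
  set Gφ := fun z : EuclideanSpace ℝ (Fin d) × EuclideanSpace ℝ (Fin d) =>
    ENNReal.ofReal (|φ z.1 - φ z.2| ^ p / ‖z.1 - z.2‖ ^ t) with hGφ
  have hmGw : Measurable Gw := measurable_gag_integrand hw p t
  have hmGφ : Measurable Gφ := measurable_gag_integrand hφ p t
  have key : ∀ z : EuclideanSpace ℝ (Fin d) × EuclideanSpace ℝ (Fin d),
      ENNReal.ofReal ‖spow (p - 1) (w z.1 - w z.2) * (φ z.1 - φ z.2) / ‖z.1 - z.2‖ ^ t‖ ≤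
        Gw z ^ ((p - 1) / p) * Gφ z ^ (1 / p) := by
    intro z
    have hKnn : (0:ℝ) ≤ ‖z.1 - z.2‖ ^ t := Real.rpow_nonneg (norm_nonneg _) t
    have h1 : ‖spow (p - 1) (w z.1 - w z.2) * (φ z.1 - φ z.2) / ‖z.1 - z.2‖ ^ t‖ =
        |w z.1 - w z.2| ^ (p - 1) * |φ z.1 - φ z.2| / ‖z.1 - z.2‖ ^ t := by
      rw [Real.norm_eq_abs, abs_div, abs_of_nonneg hKnn, abs_mul, abs_spow_s2 hp1]
    rw [h1, hGw, hGφ,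
      ENNReal.ofReal_rpow_of_nonneg (by positivity) (by positivity),
      ENNReal.ofReal_rpow_of_nonneg (by positivity) (by positivity),
      ← ENNReal.ofReal_mul (by positivity)]
    exact ENNReal.ofReal_le_ofReal (holder_pointwise hp _ _ _ hKnn)
  have hH := ENNReal.lintegral_mul_le_Lp_mul_Lq volume hq
    (f := fun z => Gw z ^ ((p - 1) / p)) (g := fun z => Gφ z ^ (1 / p))
    (hmGw.pow measurable_const).aemeasurable (hmGφ.pow measurable_const).aemeasurable
  have e1 : ∀ z, (Gw z ^ ((p - 1) / p)) ^ (p / (p - 1)) = Gw z := by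
    intro z
    rw [← ENNReal.rpow_mul, show (p - 1) / p * (p / (p - 1)) = 1 by field_simp,
      ENNReal.rpow_one]
  have e2 : ∀ z, (Gφ z ^ (1 / p)) ^ p = Gφ z := by
    intro z
    rw [← ENNReal.rpow_mul, one_div, inv_mul_cancel₀ hp0.ne', ENNReal.rpow_one]
  simp only [Pi.mul_apply, e1, e2, one_div_div] at hH
  refine lt_of_le_of_lt (le_trans (lintegral_mono key) hH) ?_
  exact ENNReal.mul_lt_top
    (ENNReal.rpow_lt_top_of_nonneg (by positivity) hgw.ne)
    (ENNReal.rpow_lt_top_of_nonneg (by positivity) hgφ.ne)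

lemma gag_posPart_sub_lt_top {d : ℕ} {s p : ℝ} (hp : 1 < p)
    {u v : EuclideanSpace ℝ (Fin d) → ℝ} (hu : Measurable u) (hv : Measurable v)
    (hgu : gagliardo d s p u < ⊤) (hgv : gagliardo d s p v < ⊤) :
    gagliardo d s p (fun x => max (u x - v x) 0) < ⊤ := by
  have hp0 : (0:ℝ) < p := by linarith
  set t := (d : ℝ) + s * p with ht
  set φ := fun x => max (u x - v x) 0 with hφ
  have key : ∀ z : EuclideanSpace ℝ (Fin d) × EuclideanSpace ℝ (Fin d),
      ENNReal.ofReal (|φ z.1 - φ z.2| ^ p / ‖z.1 - z.2‖ ^ t) ≤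
      ENNReal.ofReal (2 ^ p) *
        (ENNReal.ofReal (|u z.1 - u z.2| ^ p / ‖z.1 - z.2‖ ^ t) +
         ENNReal.ofReal (|v z.1 - v z.2| ^ p / ‖z.1 - z.2‖ ^ t)) := by
    intro z
    set K := ‖z.1 - z.2‖ ^ t with hK
    have hKnn : (0:ℝ) ≤ K := Real.rpow_nonneg (norm_nonneg _) t
    have habs : |φ z.1 - φ z.2| ≤ |u z.1 - u z.2| + |v z.1 - v z.2| := by
      have h1 : |φ z.1 - φ z.2| ≤ |(u z.1 - v z.1) - (u z.2 - v z.2)| :=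
        abs_max_sub_max_le_abs _ _ _
      have h2 : (u z.1 - v z.1) - (u z.2 - v z.2) =
          (u z.1 - u z.2) - (v z.1 - v z.2) := by ring
      rw [h2] at h1
      exact h1.trans (abs_sub _ _)
    have h2 : |φ z.1 - φ z.2| ^ p ≤ 2 ^ p * (|u z.1 - u z.2| ^ p + |v z.1 - v z.2| ^ p) :=
      (Real.rpow_le_rpow (abs_nonneg _) habs hp0.le).trans
        (add_rpow_le_two_rpow hp0.le (abs_nonneg _) (abs_nonneg _))
    rw [← ENNReal.ofReal_add (by positivity) (by positivity),
      ← ENNReal.ofReal_mul (by positivity)]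
    apply ENNReal.ofReal_le_ofReal
    rcases eq_or_lt_of_le hKnn with h0 | hKpos
    · rw [← h0]
      norm_num
    · rw [← add_div, ← mul_div_assoc]
      exact (div_le_div_iff_of_pos_right hKpos).mpr h2
  calc gagliardo d s p φ
      ≤ ∫⁻ z : EuclideanSpace ℝ (Fin d) × EuclideanSpace ℝ (Fin d),
          ENNReal.ofReal (2 ^ p) *
            (ENNReal.ofReal (|u z.1 - u z.2| ^ p / ‖z.1 - z.2‖ ^ t) +
             ENNReal.ofReal (|v z.1 - v z.2| ^ p / ‖z.1 - z.2‖ ^ t)) := lintegral_mono key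
    _ = ENNReal.ofReal (2 ^ p) * (gagliardo d s p u + gagliardo d s p v) := by
        rw [lintegral_const_mul' _ _ ENNReal.ofReal_ne_top,
          lintegral_add_left (measurable_gag_integrand hu p t)]
        rfl
    _ < ⊤ := ENNReal.mul_lt_top ENNReal.ofReal_lt_top
        (ENNReal.add_lt_top.mpr ⟨hgu, hgv⟩)


set_option maxHeartbeats 1000000 in
/-- weak comparison principle. If `g` is nondecreasing,
`u, v ∈ L^r(Ω) ∩ W^{s,p}_0(Ω)`, `g∘u, g∘v ∈ L^{r′}(Ω)` and for every nonnegative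
`φ ∈ L^r(Ω) ∩ W^{s,p}_0(Ω)` one has
`∫_Ω g(u)φ + λ E(u,φ) ≤ ∫_Ω g(v)φ + λ E(v,φ)`, then `u ≤ v` a.e. in `Ω`. -/
theorem stmt2 (d : ℕ) (hd : 1 ≤ d) (p s : ℝ) (hp : 1 < p) (hs : s ∈ Set.Ioo (0 : ℝ) 1)
    (Ω : Set (EuclideanSpace ℝ (Fin d))) (hΩo : IsOpen Ω) (hΩb : Bornology.IsBounded Ω)
    (lam : ℝ) (hlam : 0 < lam) (r r' : ℝ≥0∞) (hr : 1 ≤ r) (hrr' : 1 / r + 1 / r' = 1)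
    (g : ℝ → ℝ) (hg : Monotone g)
    (u v : EuclideanSpace ℝ (Fin d) → ℝ)
    (hu : MemLp u r (volume.restrict Ω) ∧ memW0 d s p Ω u)
    (hv : MemLp v r (volume.restrict Ω) ∧ memW0 d s p Ω v)
    (hgu : MemLp (fun x => g (u x)) r' (volume.restrict Ω))
    (hgv : MemLp (fun x => g (v x)) r' (volume.restrict Ω))
    (hcomp : ∀ φ : EuclideanSpace ℝ (Fin d) → ℝ,
      MemLp φ r (volume.restrict Ω) → memW0 d s p Ω φ → (∀ x, 0 ≤ φ x) →
      (∫ x in Ω, g (u x) * φ x) + lam * fracPairing d s p u φ ≤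
        (∫ x in Ω, g (v x) * φ x) + lam * fracPairing d s p v φ) :
    ∀ᵐ x ∂(volume.restrict Ω), u x ≤ v x := by
  obtain ⟨hur, hum, hup, hug, huz⟩ := hu
  obtain ⟨hvr, hvm, hvp, hvg, hvz⟩ := hv
  have hp1 : (0:ℝ) < p - 1 := by linarith
  set φ := fun x => max (u x - v x) 0 with hφdef
  have hφm : Measurable φ := (hum.sub hvm).max measurable_const
  have hφnn : ∀ x, 0 ≤ φ x := fun x => le_max_right _ _
  have hφr : MemLp φ r (volume.restrict Ω) := (hur.sub hvr).pos_part
  have hφp : MemLp φ (ENNReal.ofReal p) volume := (hup.sub hvp).pos_part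
  have hφg : gagliardo d s p φ < ⊤ := gag_posPart_sub_lt_top hp hum hvm hug hvg
  have hφz : ∀ᵐ x, x ∉ Ω → φ x = 0 := by
    filter_upwards [huz, hvz] with x h1 h2 hx
    simp [hφdef, h1 hx, h2 hx]
  have hφW : memW0 d s p Ω φ := ⟨hφm, hφp, hφg, hφz⟩
  -- Step A : ∫ g(v)φ ≤ ∫ g(u)φ
  have h1 : (1:ℝ≥0∞) / 1 = 1 / r + 1 / r' := by
    simpa using hrr'.symm
  have intu : Integrable (fun x => g (u x) * φ x) (volume.restrict Ω) := by
    have h2 := hgu.smul hφr (r := 1) (hpqr := ⟨by simpa [one_div] using hrr'⟩)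
    rw [memLp_one_iff_integrable] at h2
    have h3 : (φ • fun x => g (u x)) = fun x => g (u x) * φ x := by
      funext x; simp [mul_comm]
    rwa [h3] at h2
  have intv : Integrable (fun x => g (v x) * φ x) (volume.restrict Ω) := by
    have h2 := hgv.smul hφr (r := 1) (hpqr := ⟨by simpa [one_div] using hrr'⟩)
    rw [memLp_one_iff_integrable] at h2
    have h3 : (φ • fun x => g (v x)) = fun x => g (v x) * φ x := by
      funext x; simp [mul_comm]
    rwa [h3] at h2
  have hA : (∫ x in Ω, g (v x) * φ x) ≤ ∫ x in Ω, g (u x) * φ x := by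
    refine integral_mono intv intu fun x => ?_
    rcases (hφnn x).lt_or_eq with h | h
    · have hx : v x < u x := by
        by_contra hc
        push_neg at hc
        have : φ x = 0 := by
          rw [hφdef]; simp only; rw [max_eq_right (by linarith)]
        rw [this] at h; exact lt_irrefl _ h
      exact mul_le_mul_of_nonneg_right (hg hx.le) (hφnn x)
    · simp only [← h, mul_zero, le_refl]
  -- Step B : fracPairing u φ ≤ fracPairing v φ
  have hB := hcomp φ hφr hφW hφnn
  have hEle : fracPairing d s p u φ ≤ fracPairing d s p v φ := by
    have h2 : lam * fracPairing d s p u φ ≤ lam * fracPairing d s p v φ := by linarith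
    exact le_of_mul_le_mul_left h2 hlam
  -- Step C : integral of the nonnegative difference is zero
  set F := fun z : EuclideanSpace ℝ (Fin d) × EuclideanSpace ℝ (Fin d) =>
    spow (p - 1) (u z.1 - u z.2) * (φ z.1 - φ z.2) / ‖z.1 - z.2‖ ^ ((d : ℝ) + s * p) with hF
  set G := fun z : EuclideanSpace ℝ (Fin d) × EuclideanSpace ℝ (Fin d) =>
    spow (p - 1) (v z.1 - v z.2) * (φ z.1 - φ z.2) / ‖z.1 - z.2‖ ^ ((d : ℝ) + s * p) with hG
  have intF : Integrable F volume := integrable_pairing hp hum hφm hug hφg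
  have intG : Integrable G volume := integrable_pairing hp hvm hφm hvg hφg
  have efu : fracPairing d s p u φ = ∫ z, F z := rfl
  have efv : fracPairing d s p v φ = ∫ z, G z := rfl
  have hsign : ∀ z : EuclideanSpace ℝ (Fin d) × EuclideanSpace ℝ (Fin d),
      0 ≤ F z - G z ∧ (F z - G z = 0 → φ z.1 = φ z.2) := by
    intro z
    have hKnn : (0:ℝ) ≤ ‖z.1 - z.2‖ ^ ((d : ℝ) + s * p) :=
      Real.rpow_nonneg (norm_nonneg _) _
    have hFG : F z - G z =
        (spow (p - 1) (u z.1 - u z.2) - spow (p - 1) (v z.1 - v z.2)) * (φ z.1 - φ z.2) /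
          ‖z.1 - z.2‖ ^ ((d : ℝ) + s * p) := by
      rw [hF, hG]; simp only
      rw [div_sub_div_same, ← sub_mul]
    have hac : φ z.1 - φ z.2 ≠ 0 →
        0 < (spow (p - 1) (u z.1 - u z.2) - spow (p - 1) (v z.1 - v z.2)) *
          (φ z.1 - φ z.2) := by
      intro hc
      rcases lt_or_gt_of_ne hc with hlt | hgt
      · have hφlt : φ z.1 < φ z.2 := by linarith
        have hw : u z.1 - v z.1 < u z.2 - v z.2 := posPart_lt_posPart hφlt
        have hab : u z.1 - u z.2 < v z.1 - v z.2 := by linarith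
        have hAB := spow_strictMono hp1 hab
        exact mul_pos_of_neg_of_neg (by linarith) (by linarith)
      · have hφgt : φ z.2 < φ z.1 := by linarith
        have hw : u z.2 - v z.2 < u z.1 - v z.1 := posPart_lt_posPart hφgt
        have hab : v z.1 - v z.2 < u z.1 - u z.2 := by linarith
        have hAB := spow_strictMono hp1 hab
        exact mul_pos (by linarith) (by linarith)
    constructor
    · rw [hFG]
      refine div_nonneg ?_ hKnn
      rcases eq_or_ne (φ z.1 - φ z.2) 0 with h | h
      · rw [h, mul_zero]
      · exact (hac h).le
    · intro h0
      by_contra hne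
      have hc : φ z.1 - φ z.2 ≠ 0 := sub_ne_zero.mpr hne
      have hz12 : z.1 ≠ z.2 := by
        intro heq
        exact hc (by rw [heq, sub_self])
      have hKpos : (0:ℝ) < ‖z.1 - z.2‖ ^ ((d : ℝ) + s * p) :=
        Real.rpow_pos_of_pos (norm_pos_iff.mpr (sub_ne_zero.mpr hz12)) _
      rw [hFG] at h0
      exact absurd h0.symm (div_pos (hac hc) hKpos).ne
  have hint0 : (∫ z, (F z - G z)) = 0 := by
    apply le_antisymm
    · rw [integral_sub intF intG]
      rw [efu, efv] at hEle
      linarith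
    · exact integral_nonneg fun z => (hsign z).1
  have haeeq : ∀ᵐ z : EuclideanSpace ℝ (Fin d) × EuclideanSpace ℝ (Fin d), F z - G z = 0 := by
    have h2 := (integral_eq_zero_iff_of_nonneg (fun z => (hsign z).1) (intF.sub intG)).mp hint0
    filter_upwards [h2] with z hz using hz
  have haeφ : ∀ᵐ z : EuclideanSpace ℝ (Fin d) × EuclideanSpace ℝ (Fin d) ∂volume,
      φ z.1 = φ z.2 := by
    filter_upwards [haeeq] with z hz using (hsign z).2 hz
  rw [Measure.volume_eq_prod] at haeφ
  have hfub := Measure.ae_ae_of_ae_prod haeφ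
  -- a ball outside Ω
  obtain ⟨R, hR⟩ := hΩb.subset_closedBall 0
  set c0 : EuclideanSpace ℝ (Fin d) := EuclideanSpace.single ⟨0, hd⟩ (|R| + 2) with hc0
  have hc0norm : ‖c0‖ = |R| + 2 := by
    rw [hc0, EuclideanSpace.norm_single, Real.norm_eq_abs, abs_of_nonneg (by positivity)]
  have hdisj : ∀ y ∈ Metric.ball c0 1, y ∉ Ω := by
    intro y hy hyΩ
    have h1 : ‖y - c0‖ < 1 := mem_ball_iff_norm.mp hy
    have h2 : ‖y‖ ≤ R := by
      have := hR hyΩ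
      rwa [Metric.mem_closedBall, dist_zero_right] at this
    have h3 : ‖c0‖ - ‖y‖ ≤ ‖y - c0‖ := by
      rw [norm_sub_rev]
      exact norm_sub_norm_le c0 y
    rw [hc0norm] at h3
    have := le_abs_self R
    linarith
  have hballpos : 0 < volume (Metric.ball c0 1) := Metric.measure_ball_pos volume c0 one_pos
  have hφ0 : ∀ᵐ x : EuclideanSpace ℝ (Fin d) ∂volume, φ x = 0 := by
    filter_upwards [hfub] with x hx
    have hS : ∀ᵐ y : EuclideanSpace ℝ (Fin d) ∂volume,
        φ x = φ y ∧ (y ∉ Ω → φ y = 0) := hx.and hφz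
    have h0 : volume {y : EuclideanSpace ℝ (Fin d) |
        ¬ (φ x = φ y ∧ (y ∉ Ω → φ y = 0))} = 0 := by
      exact hS
    have hne : (Metric.ball c0 1 ∩
        {y : EuclideanSpace ℝ (Fin d) | φ x = φ y ∧ (y ∉ Ω → φ y = 0)}).Nonempty := by
      by_contra hemp
      rw [Set.not_nonempty_iff_eq_empty] at hemp
      have hsub : Metric.ball c0 1 ⊆
          {y : EuclideanSpace ℝ (Fin d) | ¬ (φ x = φ y ∧ (y ∉ Ω → φ y = 0))} := by
        intro y hy hyS
        exact Set.eq_empty_iff_forall_notMem.mp hemp y ⟨hy, hyS⟩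
      exact absurd ((measure_mono hsub).trans h0.le) (not_le.mpr hballpos)
    obtain ⟨y, hyb, hy1, hy2⟩ := hne
    exact hy1.trans (hy2 (hdisj y hyb))
  refine ae_restrict_of_ae ?_
  filter_upwards [hφ0] with x hx
  have hle : u x - v x ≤ 0 := by
    by_contra hc
    push_neg at hc
    rw [hφdef] at hx
    simp only at hx
    rw [max_eq_left hc.le] at hx
    linarith
  linarith
end

section
/- (Finite-time extinction ODE lemma.) Let c > 0, C ≥ 0 and 0 < α < γ < 1. Let M : [0,∞) → [0,∞) be continuous and satisfy M(t₂) − M(t₁) ≤ ∫_{t₁}^{t₂} (C·M(τ)^γ − c·M(τ)^α) dτ for all 0 ≤ t₁ ≤ t₂. Assume that either C = 0, or M(0)^{γ−α} < c/C. Then M is nonincreasing and there exists t₀ ≥ 0 such that M(t) = 0 for all t ≥ t₀. -/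
private lemma rpow_cont' (q : ℝ) (hq : 0 ≤ q) : Continuous fun x : ℝ => x ^ q := by
  rw [continuous_iff_continuousAt]
  intro x
  exact Real.continuousAt_rpow_const x q (Or.inr hq)

/-- finite-time extinction ODE lemma. Let `c > 0`, `C ≥ 0`,
`0 < α < γ < 1`, and let `M : [0,∞) → [0,∞)` be continuous with
`M(t₂) − M(t₁) ≤ ∫_{t₁}^{t₂} (C M^γ − c M^α)` for all `0 ≤ t₁ ≤ t₂`. If `C = 0` or
`M(0)^{γ−α} < c/C`, then `M` is nonincreasing and vanishes identically from some time
`t₀` on. -/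
theorem stmt9 (c C α γ : ℝ) (hc : 0 < c) (hC : 0 ≤ C)
    (hα : 0 < α) (hαγ : α < γ) (hγ : γ < 1)
    (M : ℝ → ℝ) (hMcont : ContinuousOn M (Set.Ici 0))
    (hMnonneg : ∀ t, 0 ≤ t → 0 ≤ M t)
    (hMineq : ∀ t₁ t₂ : ℝ, 0 ≤ t₁ → t₁ ≤ t₂ →
      M t₂ - M t₁ ≤ ∫ τ in t₁..t₂, (C * M τ ^ γ - c * M τ ^ α))
    (hsmall : C = 0 ∨ M 0 ^ (γ - α) < c / C) :
    (∀ t₁ t₂ : ℝ, 0 ≤ t₁ → t₁ ≤ t₂ → M t₂ ≤ M t₁) ∧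
      ∃ t₀ : ℝ, 0 ≤ t₀ ∧ ∀ t, t₀ ≤ t → M t = 0 := by
  have hγ0 : 0 < γ := hα.trans hαγ
  have hγα : 0 < γ - α := by linarith
  set b : ℝ := M 0 with hbdef
  have hb0 : 0 ≤ b := hMnonneg 0 le_rfl
  -- the key positive constant
  have hKpos : C * b ^ (γ - α) < c := by
    rcases hsmall with h | h
    · simpa [h] using hc
    · rcases eq_or_lt_of_le hC with hC0 | hCpos
      · simpa [← hC0] using hc
      · calc C * b ^ (γ - α) < C * (c / C) := by
              exact (mul_lt_mul_iff_right₀ hCpos).mpr h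
          _ = c := by field_simp
  set K : ℝ := c - C * b ^ (γ - α) with hKdef
  have hK : 0 < K := by simpa [hKdef] using sub_pos.mpr hKpos
  clear_value K
  -- continuity of the integrand
  have gcont : ContinuousOn (fun τ => C * M τ ^ γ - c * M τ ^ α) (Set.Ici 0) := by
    apply ContinuousOn.sub
    · exact continuousOn_const.mul ((rpow_cont' γ hγ0.le).comp_continuousOn hMcont)
    · exact continuousOn_const.mul ((rpow_cont' α hα.le).comp_continuousOn hMcont)
  -- pointwise bound under a barrier
  have hbound0 : ∀ m : ℝ, 0 ≤ m → C * m ^ (γ - α) ≤ c → C * m ^ γ - c * m ^ α ≤ 0 := by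
    intro m hm hmc
    rcases eq_or_lt_of_le hm with hm0 | hm0
    · simp [← hm0, Real.zero_rpow hγ0.ne', Real.zero_rpow hα.ne']
    · have hsplit : m ^ γ = m ^ α * m ^ (γ - α) := by
        rw [← Real.rpow_add hm0]; ring_nf
      have hmα : 0 < m ^ α := Real.rpow_pos_of_pos hm0 α
      rw [hsplit]
      nlinarith [Real.rpow_nonneg hm (γ - α)]
  -- pointwise bound below b
  have hbound : ∀ m : ℝ, 0 ≤ m → m ≤ b → C * m ^ γ - c * m ^ α ≤ -K * m ^ α := by
    intro m hm hmb
    rcases eq_or_lt_of_le hm with hm0 | hm0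
    · simp [← hm0, Real.zero_rpow hγ0.ne', Real.zero_rpow hα.ne']
    · have hsplit : m ^ γ = m ^ α * m ^ (γ - α) := by
        rw [← Real.rpow_add hm0]; ring_nf
      have hmα : 0 < m ^ α := Real.rpow_pos_of_pos hm0 α
      have hmono : m ^ (γ - α) ≤ b ^ (γ - α) := Real.rpow_le_rpow hm hmb hγα.le
      rw [hsplit, hKdef]
      nlinarith [mul_le_mul_of_nonneg_left (mul_le_mul_of_nonneg_left hmono hC) hmα.le]
  -- Step 1 : M t ≤ b for all t ≥ 0
  have key : ∀ t, 0 ≤ t → M t ≤ b := by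
    intro tstar htstar
    by_contra hcon
    push_neg at hcon
    -- choose a barrier b'' with b < b'' < M t*, C b''^(γ-α) ≤ c
    obtain ⟨b'', hbb, hbM, hbc⟩ :
        ∃ b'' : ℝ, b < b'' ∧ b'' < M tstar ∧ C * b'' ^ (γ - α) ≤ c := by
      rcases eq_or_lt_of_le hC with hC0 | hCpos
      · exact ⟨(b + M tstar) / 2, by linarith, by linarith, by rw [← hC0]; simpa using hc.le⟩
      · set θ : ℝ := (c / C) ^ (1 / (γ - α)) with hθdef
        have hcC : 0 < c / C := div_pos hc hCpos
        have hθγα : θ ^ (γ - α) = c / C := by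
          rw [hθdef, ← Real.rpow_mul hcC.le, one_div, inv_mul_cancel₀ hγα.ne',
            Real.rpow_one]
        have hbθ : b < θ := by
          by_contra hbθ
          push_neg at hbθ
          have : θ ^ (γ - α) ≤ b ^ (γ - α) :=
            Real.rpow_le_rpow (Real.rpow_nonneg hcC.le _) hbθ hγα.le
          rw [hθγα] at this
          have : C * (c / C) ≤ C * b ^ (γ - α) := (mul_le_mul_iff_right₀ hCpos).mpr this
          rw [mul_div_cancel₀ _ hCpos.ne'] at this
          linarith
        refine ⟨min θ ((b + M tstar) / 2), lt_min hbθ (by linarith),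
          lt_of_le_of_lt (min_le_right _ _) (by linarith), ?_⟩
        have hmin : (0:ℝ) ≤ min θ ((b + M tstar) / 2) := le_of_lt (lt_of_le_of_lt hb0 (lt_min hbθ (by linarith)))
        have : (min θ ((b + M tstar) / 2)) ^ (γ - α) ≤ θ ^ (γ - α) :=
          Real.rpow_le_rpow hmin (min_le_left _ _) hγα.le
        calc C * (min θ ((b + M tstar) / 2)) ^ (γ - α) ≤ C * (c / C) := by
              rw [← hθγα]; exact (mul_le_mul_iff_right₀ hCpos).mpr this
          _ = c := by field_simp
    have hb''0 : 0 ≤ b'' := hb0.trans hbb.le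
    -- first hitting time of level b''
    set S : Set ℝ := {t | t ∈ Set.Icc 0 tstar ∧ b'' ≤ M t} with hSdef
    have hSne : S.Nonempty := ⟨tstar, ⟨le_rfl.trans' htstar, le_rfl⟩, hbM.le⟩
    have hSclosed : IsClosed S := by
      have h1 := (hMcont.mono (Set.Icc_subset_Ici_self :
          Set.Icc 0 tstar ⊆ Set.Ici 0)).preimage_isClosed_of_isClosed
        isClosed_Icc (isClosed_Ici (a := b''))
      have h2 : S = Set.Icc 0 tstar ∩ M ⁻¹' Set.Ici b'' := by
        ext u; simp [hSdef]
      rw [h2]; exact h1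
    have hSbdd : BddBelow S := ⟨0, fun t ht => ht.1.1⟩
    set s₂ : ℝ := sInf S with hs₂def
    have hs₂S : s₂ ∈ S := hSclosed.csInf_mem hSne hSbdd
    have hs₂0 : 0 ≤ s₂ := hs₂S.1.1
    have hs₂pos : 0 < s₂ := by
      rcases eq_or_lt_of_le hs₂0 with h0 | h; swap; · exact h
      exfalso
      have := hs₂S.2
      rw [← h0] at this
      exact absurd this (by rw [← hbdef]; linarith)
    -- below s₂ the function stays under b''
    have hlt : ∀ u, 0 ≤ u → u < s₂ → M u < b'' := by
      intro u hu hus₂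
      by_contra hle
      push_neg at hle
      have : u ∈ S := ⟨⟨hu, hus₂.le.trans hs₂S.1.2⟩, hle⟩
      exact absurd (csInf_le hSbdd this) (not_le.mpr hus₂)
    -- hence M u ≤ b for u < s₂
    have hub : ∀ u, 0 ≤ u → u < s₂ → M u ≤ b := by
      intro u hu hus₂
      have hineq := hMineq 0 u le_rfl hu
      have hint : (∫ τ in (0:ℝ)..u, (C * M τ ^ γ - c * M τ ^ α)) ≤ 0 := by
        have h0 : (0:ℝ) ≤ ∫ τ in (0:ℝ)..u, -(C * M τ ^ γ - c * M τ ^ α) := by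
          apply intervalIntegral.integral_nonneg hu
          intro τ hτ
          have hτ0 : 0 ≤ τ := hτ.1
          have hτs : M τ ≤ b'' := (hlt τ hτ0 (lt_of_le_of_lt hτ.2 hus₂)).le
          have : C * M τ ^ (γ - α) ≤ c := by
            calc C * M τ ^ (γ - α) ≤ C * b'' ^ (γ - α) := by
                  exact mul_le_mul_of_nonneg_left
                    (Real.rpow_le_rpow (hMnonneg τ hτ0) hτs hγα.le) hC
              _ ≤ c := hbc
          simpa using hbound0 (M τ) (hMnonneg τ hτ0) this
        rw [intervalIntegral.integral_neg] at h0
        linarith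
      linarith
    -- continuity from the left gives M s₂ ≤ b, contradiction
    have hclos : s₂ ∈ closure (Set.Ioo 0 s₂) := by
      rw [closure_Ioo hs₂pos.ne]
      exact ⟨hs₂0, le_rfl⟩
    have hnebot : (nhdsWithin s₂ (Set.Ioo 0 s₂)).NeBot :=
      mem_closure_iff_nhdsWithin_neBot.mp hclos
    have hcont : Filter.Tendsto M (nhdsWithin s₂ (Set.Ioo 0 s₂)) (nhds (M s₂)) :=
      (hMcont s₂ hs₂0).mono (fun x hx => hx.1.le)
    have hMs₂ : M s₂ ≤ b := by
      refine le_of_tendsto hcont ?_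
      filter_upwards [self_mem_nhdsWithin] with u hu
      exact hub u hu.1.le hu.2
    have := hs₂S.2
    linarith
  -- Step 2 : monotonicity
  have mono : ∀ t₁ t₂ : ℝ, 0 ≤ t₁ → t₁ ≤ t₂ → M t₂ ≤ M t₁ := by
    intro t₁ t₂ ht₁ h12
    have hineq := hMineq t₁ t₂ ht₁ h12
    have hint : (∫ τ in t₁..t₂, (C * M τ ^ γ - c * M τ ^ α)) ≤ 0 := by
      have h0 : (0:ℝ) ≤ ∫ τ in t₁..t₂, -(C * M τ ^ γ - c * M τ ^ α) := by
        apply intervalIntegral.integral_nonneg h12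
        intro τ hτ
        have hτ0 : 0 ≤ τ := ht₁.trans hτ.1
        have h := hbound (M τ) (hMnonneg τ hτ0) (key τ hτ0)
        have : -K * M τ ^ α ≤ 0 := by
          have := Real.rpow_nonneg (hMnonneg τ hτ0) α
          nlinarith
        linarith [h, this]
      rw [intervalIntegral.integral_neg] at h0
      linarith
    linarith
  refine ⟨mono, ?_⟩
  -- Step 3 : finite-time extinction
  rcases eq_or_lt_of_le hb0 with hbz | hbpos
  · refine ⟨0, le_rfl, fun t ht => le_antisymm ?_ (hMnonneg t ht)⟩
    have := key t ht
    linarith [this]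
  -- halving lemma
  set F : ℝ := (2:ℝ) ^ α / K with hFdef
  have h2α : (0:ℝ) < (2:ℝ) ^ α := Real.rpow_pos_of_pos two_pos α
  have hF : 0 < F := div_pos h2α hK
  have halving : ∀ t, 0 ≤ t → ∀ x, 0 < x → x ≤ b → M t ≤ x →
      M (t + F * x ^ (1 - α)) ≤ x / 2 := by
    intro t ht x hx hxb hMt
    set d : ℝ := F * x ^ (1 - α) with hddef
    have hd : 0 < d := mul_pos hF (Real.rpow_pos_of_pos hx _)
    by_contra hcon
    push_neg at hcon
    have hlow : ∀ s, s ∈ Set.Icc t (t + d) → x / 2 < M s := by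
      intro s hs
      exact lt_of_lt_of_le hcon (mono s (t + d) (ht.trans hs.1) hs.2)
    -- integrand bound on the interval
    have hptwise : ∀ s, s ∈ Set.Icc t (t + d) →
        C * M s ^ γ - c * M s ^ α ≤ -K * (x / 2) ^ α := by
      intro s hs
      have hs0 : 0 ≤ s := ht.trans hs.1
      have h1 := hbound (M s) (hMnonneg s hs0) (key s hs0)
      have h2 : (x / 2) ^ α ≤ M s ^ α :=
        Real.rpow_le_rpow (by linarith) (hlow s hs).le hα.le
      have h3 : K * (x / 2) ^ α ≤ K * M s ^ α := mul_le_mul_of_nonneg_left h2 hK.le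
      linarith
    have hInt1 : IntervalIntegrable (fun τ => C * M τ ^ γ - c * M τ ^ α)
        MeasureTheory.volume t (t + d) := by
      apply ContinuousOn.intervalIntegrable
      apply gcont.mono
      rw [Set.uIcc_of_le (by linarith)]
      intro s hs
      exact ht.trans hs.1
    have hInt2 : IntervalIntegrable (fun _ : ℝ => -K * (x / 2) ^ α)
        MeasureTheory.volume t (t + d) := intervalIntegrable_const
    have hintle : (∫ τ in t..(t + d), (C * M τ ^ γ - c * M τ ^ α)) ≤
        ∫ _ in t..(t + d), -K * (x / 2) ^ α :=
      intervalIntegral.integral_mono_on (by linarith) hInt1 hInt2 hptwise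
    rw [intervalIntegral.integral_const] at hintle
    have hval : (t + d - t) • (-K * (x / 2) ^ α) = -x := by
      have hx2 : (x / 2) ^ α = x ^ α / (2:ℝ) ^ α :=
        Real.div_rpow hx.le (by norm_num) α
      have hxsum : x ^ (1 - α) * x ^ α = x := by
        rw [← Real.rpow_add hx]; norm_num
      rw [smul_eq_mul]
      have : t + d - t = d := by ring
      rw [this, hddef, hx2, hFdef]
      field_simp
      linear_combination (-1 : ℝ) * hxsum
    rw [hval] at hintle
    have := hMineq t (t + d) ht (by linarith)
    have hMtd : M (t + d) ≤ 0 := by linarith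
    linarith
  -- geometric iteration
  set r : ℝ := ((2:ℝ) ^ (1 - α))⁻¹ with hrdef
  have h21α : (1:ℝ) < (2:ℝ) ^ (1 - α) := by
    rw [Real.one_lt_rpow_iff_of_pos two_pos]
    left; constructor <;> [norm_num; linarith]
  have hr0 : 0 < r := by positivity
  have hr1 : r < 1 := by
    rw [hrdef, inv_lt_one_iff₀]; right; exact h21α
  set D : ℝ := F * b ^ (1 - α) with hDdef
  have hD : 0 < D := mul_pos hF (Real.rpow_pos_of_pos hbpos _)
  -- the step size identity
  have hstep : ∀ n : ℕ, F * (b / 2 ^ n) ^ (1 - α) = D * r ^ n := by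
    intro n
    have h2n : (0:ℝ) < (2:ℝ) ^ n := by positivity
    have hdiv : (b / 2 ^ n) ^ (1 - α) = b ^ (1 - α) / ((2:ℝ) ^ n) ^ (1 - α) :=
      Real.div_rpow hb0 h2n.le _
    have hpow : ((2:ℝ) ^ n) ^ (1 - α) = ((2:ℝ) ^ (1 - α)) ^ n := by
      rw [← Real.rpow_natCast (2:ℝ) n, ← Real.rpow_natCast ((2:ℝ) ^ (1 - α)) n,
        ← Real.rpow_mul (by norm_num : (0:ℝ) ≤ 2), ← Real.rpow_mul (by norm_num : (0:ℝ) ≤ 2)]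
      ring_nf
    rw [hdiv, hpow, hDdef, hrdef]
    field_simp
    rw [← mul_pow, mul_one_div_cancel (by positivity : (2:ℝ) ^ (1 - α) ≠ 0), one_pow]
  set s : ℕ → ℝ := fun n => ∑ k ∈ Finset.range n, D * r ^ k with hsdef
  have hs0 : ∀ n, 0 ≤ s n := by
    intro n
    apply Finset.sum_nonneg
    intro k _
    positivity
  have hsM : ∀ n : ℕ, M (s n) ≤ b / 2 ^ n := by
    intro n
    induction n with
    | zero => simp [hsdef]; exact hbdef.symm.le
    | succ n ih =>
      have hsucc : s (n + 1) = s n + F * (b / 2 ^ n) ^ (1 - α) := by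
        rw [hsdef]
        simp only [Finset.sum_range_succ]
        rw [hstep n]
      have h2n : (0:ℝ) < (2:ℝ) ^ n := by positivity
      have := halving (s n) (hs0 n) (b / 2 ^ n) (by positivity)
        (div_le_self hb0 (one_le_pow₀ (by norm_num))) ih
      rw [← hsucc] at this
      calc M (s (n + 1)) ≤ b / 2 ^ n / 2 := this
        _ = b / 2 ^ (n + 1) := by rw [pow_succ]; ring
  -- the times s n are bounded
  set T : ℝ := D / (1 - r) with hTdef
  have hT0 : 0 ≤ T := le_of_lt (div_pos hD (by linarith))
  have hsT : ∀ n, s n ≤ T := by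
    intro n
    show (∑ k ∈ Finset.range n, D * r ^ k) ≤ T
    rw [← Finset.mul_sum, geom_sum_eq hr1.ne n, hTdef]
    have heq : (r ^ n - 1) / (r - 1) = (1 - r ^ n) / (1 - r) := by
      rw [← neg_div_neg_eq]; ring_nf
    rw [heq, ← mul_div_assoc]
    apply (div_le_div_iff_of_pos_right (by linarith : (0:ℝ) < 1 - r)).mpr
    have hrn : 0 ≤ r ^ n := by positivity
    nlinarith
  refine ⟨T, hT0, fun t htT => ?_⟩
  have htnn : 0 ≤ t := hT0.trans htT
  refine le_antisymm ?_ (hMnonneg t htnn)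
  have hMtn : ∀ n : ℕ, M t ≤ b / 2 ^ n := by
    intro n
    calc M t ≤ M (s n) := mono (s n) t (hs0 n) ((hsT n).trans htT)
      _ ≤ b / 2 ^ n := hsM n
  by_contra hpos
  push_neg at hpos
  obtain ⟨n, hn⟩ := exists_pow_lt_of_lt_one (div_pos hpos hbpos) (by norm_num : (1:ℝ)/2 < 1)
  have : b / 2 ^ n < M t := by
    have h2n : (0:ℝ) < (2:ℝ) ^ n := by positivity
    have hinv : ((1:ℝ)/2) ^ n * 2 ^ n = 1 := by rw [← mul_pow]; norm_num
    rw [lt_div_iff₀ hbpos] at hn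
    rw [div_lt_iff₀ h2n]
    have hb2 : ((1:ℝ)/2) ^ n * b * 2 ^ n = b := by
      rw [mul_right_comm, hinv, one_mul]
    nlinarith [mul_lt_mul_of_pos_right hn h2n]
  exact absurd (hMtn n) (not_le.mpr this)
end
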